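/- arXiv:1509.00653 — 6 statements merged into one kernel-verified Lean document; each statement's English description precedes it below -/
import Mathlib

section
/- Let H be an n×n complex matrix possessing n distinct real eigenvalues λ_1, …, λ_n (i.e., there is an injective function λ : {1,…,n} → ℝ and nonzero vectors φ_1, …, φ_n with Hφ_i = λ_i φ_i for all i). Then H and its conjugate transpose H* are similar: there exists an invertible n×n complex matrix S such that H* = S H S⁻¹. -/
open scoped Matrix

/-- Let `H` be an `n × n` complex matrix possessing `n` distinct real eigenvalues
`λ 1, …, λ n` (there is an injective `lam : Fin n → ℝ` and nonzero vectors `φ i` with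
`H.mulVec (φ i) = lam i • φ i`).  Then `H` and its conjugate transpose `Hᴴ` are similar:
there is an invertible matrix `S` with `Hᴴ = S * H * S⁻¹`. -/
theorem matrix_similar_conjTranspose_of_distinct_real_eigenvalues
    (n : ℕ) (H : Matrix (Fin n) (Fin n) ℂ)
    (lam : Fin n → ℝ) (hlam : Function.Injective lam)
    (φ : Fin n → (Fin n → ℂ)) (hφ : ∀ i, φ i ≠ 0)
    (heig : ∀ i, H.mulVec (φ i) = (lam i : ℂ) • φ i) :
    ∃ S : Matrix (Fin n) (Fin n) ℂ, IsUnit S ∧ Hᴴ = S * H * S⁻¹ := by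
  set P : Matrix (Fin n) (Fin n) ℂ := (Matrix.of φ)ᵀ with hP
  have hli : LinearIndependent ℂ φ := by
    apply Module.End.eigenvectors_linearIndependent' H.mulVecLin
      (fun i => (lam i : ℂ)) (fun i j h => hlam (Complex.ofReal_injective h)) φ
    intro i
    refine ⟨?_, hφ i⟩
    rw [Module.End.mem_eigenspace_iff]
    exact heig i
  have hPunit : IsUnit P := by
    rw [← Matrix.linearIndependent_cols_iff_isUnit]
    simpa [hP] using hli
  have hHunit : IsUnit Pᴴ := (Matrix.isUnit_conjTranspose P).mpr hPunit
  have hdet : IsUnit P.det := (Matrix.isUnit_iff_isUnit_det P).mp hPunit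
  have hdetH : IsUnit Pᴴ.det := (Matrix.isUnit_iff_isUnit_det _).mp hHunit
  set D : Matrix (Fin n) (Fin n) ℂ := Matrix.diagonal (fun i => (lam i : ℂ)) with hD
  have hHP : H * P = P * D := by
    ext i j
    have h1 := congrFun (heig j) i
    simp only [Matrix.mulVec, dotProduct, Pi.smul_apply, smul_eq_mul] at h1
    rw [hD, Matrix.mul_diagonal]
    simp only [hP, Matrix.transpose_apply, Matrix.of_apply, Matrix.mul_apply]
    rw [h1]; ring
  have hDH : Dᴴ = D := by
    ext i j
    rcases eq_or_ne i j with h | h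
    · subst h; simp [hD, Matrix.conjTranspose_apply, Complex.conj_ofReal]
    · simp [hD, Matrix.conjTranspose_apply, Matrix.diagonal_apply_ne, h, h.symm]
  have hDval : D = P⁻¹ * H * P := by
    rw [Matrix.mul_assoc, hHP, ← Matrix.mul_assoc, Matrix.nonsing_inv_mul P hdet, one_mul]
  have hHT : Pᴴ * Hᴴ = D * Pᴴ := by
    have := congrArg Matrix.conjTranspose hHP
    rwa [Matrix.conjTranspose_mul, Matrix.conjTranspose_mul, hDH] at this
  have key : Hᴴ = Pᴴ⁻¹ * D * Pᴴ := by
    rw [Matrix.mul_assoc, ← hHT, ← Matrix.mul_assoc, Matrix.nonsing_inv_mul Pᴴ hdetH, one_mul]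
  refine ⟨(P * Pᴴ)⁻¹, ?_, ?_⟩
  · exact Matrix.isUnit_nonsing_inv_iff.mpr (hPunit.mul hHunit)
  · rw [Matrix.nonsing_inv_nonsing_inv _ ((Matrix.isUnit_iff_isUnit_det _).mp (hPunit.mul hHunit)),
      key, hDval, Matrix.mul_inv_rev]
    simp only [Matrix.mul_assoc]
end

section
/- Let R be an associative unital ℝ-algebra containing elements a, a†, b, b† satisfying the Weyl–Heisenberg commutation relations: a a† − a† a = 1, b b† − b† b = 1, and all cross commutators vanish ([a,b] = [a,b†] = [a†,b] = [a†,b†] = 0). Fix γ > 0, set ρ = √(1+γ²) and 𝒩 = (2γρ)^{-1/2}, and define c = 𝒩((−1+ρ) b† + γ a), d = 𝒩((−1+ρ) a† + γ b), d‡ = 𝒩((1+ρ) b† − γ a), c‡ = 𝒩((1+ρ) a† − γ b). Then c, c‡, d, d‡ satisfy the Weyl–Heisenberg commutation relations: [c, c‡] = 1, [d, d‡] = 1, and [c, d] = [c, d‡] = [c‡, d] = [c‡, d‡] = 0. -/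
/-- The pseudo-boson operators `c, c‡, d, d‡` built from Weyl–Heisenberg bosons
`a, a†, b, b†` satisfy the Weyl–Heisenberg commutation relations:
`[c, c‡] = 1`, `[d, d‡] = 1` and all cross commutators vanish. -/
theorem pseudo_bosons_satisfy_weyl_heisenberg
    {R : Type*} [Ring R] [Algebra ℝ R]
    (a ad b bd : R)
    (haad : a * ad - ad * a = 1) (hbbd : b * bd - bd * b = 1)
    (hab : a * b - b * a = 0) (habd : a * bd - bd * a = 0)
    (hadb : ad * b - b * ad = 0) (hadbd : ad * bd - bd * ad = 0)
    (γ : ℝ) (hγ : 0 < γ)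
    (ρ : ℝ) (hρ : ρ = Real.sqrt (1 + γ ^ 2))
    (N : ℝ) (hN : N = (Real.sqrt (2 * γ * ρ))⁻¹)
    (c d cd dd : R)
    (hc : c = N • ((-1 + ρ) • bd + γ • a))
    (hd : d = N • ((-1 + ρ) • ad + γ • b))
    (hdd : dd = N • ((1 + ρ) • bd - γ • a))
    (hcd : cd = N • ((1 + ρ) • ad - γ • b)) :
    c * cd - cd * c = 1 ∧ d * dd - dd * d = 1 ∧
      c * d - d * c = 0 ∧ c * dd - dd * c = 0 ∧
      cd * d - d * cd = 0 ∧ cd * dd - dd * cd = 0 := by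
  have hρpos : 0 < ρ := by rw [hρ]; positivity
  have hpos : 0 < 2 * γ * ρ := by positivity
  have hN2 : N * N * (2 * γ * ρ) = 1 := by
    rw [hN, ← mul_inv, Real.mul_self_sqrt hpos.le]
    exact inv_mul_cancel₀ hpos.ne'
  have h1 : a * ad = ad * a + 1 := by rw [← haad]; noncomm_ring
  have h2 : b * bd = bd * b + 1 := by rw [← hbbd]; noncomm_ring
  have h3 : a * b = b * a := by rw [← sub_eq_zero]; exact hab
  have h4 : a * bd = bd * a := by rw [← sub_eq_zero]; exact habd
  have h5 : ad * b = b * ad := by rw [← sub_eq_zero]; exact hadb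
  have h6 : ad * bd = bd * ad := by rw [← sub_eq_zero]; exact hadbd
  have hone : (1 : R) = (N * N * (2 * γ * ρ)) • (1 : R) := by rw [hN2, one_smul]
  subst hc hd hdd hcd
  refine ⟨?_, ?_, ?_, ?_, ?_, ?_⟩ <;>
    · try rw (config := {occs := .pos [1]}) [hone]
      simp only [smul_add, smul_sub, smul_smul, add_mul, mul_add, sub_mul, mul_sub,
        smul_mul_assoc, mul_smul_comm, h1, h2, h3, h4, h5, h6]
      module
end

section
/- Let V be a complex vector space and let C, C‡, D, D‡ be linear endomorphisms of V satisfying the pseudo-boson Weyl–Heisenberg relations [C, C‡] = 1, [D, D‡] = 1, with all cross commutators vanishing ([C,D] = [C,D‡] = [C‡,D] = [C‡,D‡] = 0). Let β, ρ ∈ ℝ, let H = β(C‡C − D‡D) + ρ(C‡C + DD‡), and suppose ψ₀ ∈ V satisfies Cψ₀ = Dψ₀ = 0. Then for all natural numbers m, n, the vector Ψ_{m,n} = C‡ᵐ D‡ⁿ ψ₀ satisfies H Ψ_{m,n} = (ρ + m(β+ρ) + n(−β+ρ)) • Ψ_{m,n}. In particular, with ρ = √(1+γ²) the eigenvalues of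 H are E_{m,n} = √(1+γ²) + m(β+√(1+γ²)) + n(−β+√(1+γ²)). -/
/-- If `A` commutes with `B`, then `A` commutes with `B^n` applied to a vector. -/
private lemma comm_pow_apply {V : Type*} [AddCommGroup V] [Module ℂ V]
    (A B : Module.End ℂ V) (h : A * B - B * A = 0) (n : ℕ) (x : V) :
    A ((B ^ n) x) = (B ^ n) (A x) := by
  have h' : A * B = B * A := sub_eq_zero.mp h
  induction n with
  | zero => simp
  | succ k ih =>
      rw [pow_succ', Module.End.mul_apply, Module.End.mul_apply]
      have := congrArg (fun T : Module.End ℂ V => T ((B ^ k) x)) h'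
      simp only [Module.End.mul_apply] at this
      rw [this, ih]
  -- note: pow_succ' : B ^ (k+1) = B * B ^ k

/-- Number operator lemma: if `[A, Ad] = 1` and `A x₀ = 0`, then
`(Ad * A)` acts as `n` on `Ad^n x₀`. -/
private lemma number_op {V : Type*} [AddCommGroup V] [Module ℂ V]
    (A Ad : Module.End ℂ V) (h : A * Ad - Ad * A = 1)
    (x₀ : V) (hx : A x₀ = 0) (n : ℕ) :
    (Ad * A) ((Ad ^ n) x₀) = (n : ℂ) • (Ad ^ n) x₀ := by
  have h' : A * Ad = Ad * A + 1 := sub_eq_iff_eq_add'.mp h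
  induction n with
  | zero => simp [hx]
  | succ k ih =>
      rw [pow_succ']
      simp only [Module.End.mul_apply] at *
      have hA : A (Ad ((Ad ^ k) x₀)) = Ad (A ((Ad ^ k) x₀)) + (Ad ^ k) x₀ := by
        have := congrArg (fun T : Module.End ℂ V => T ((Ad ^ k) x₀)) h'
        simpa [Module.End.mul_apply] using this
      rw [hA, map_add, ih, map_smul]
      push_cast
      rw [add_smul, one_smul]

/-- The vectors `Ψ_{m,n} = C‡ᵐ D‡ⁿ ψ₀` built from the pseudo-boson vacuum `ψ₀` are
eigenvectors of `H = β(C‡C − D‡D) + ρ(C‡C + DD‡)` with eigenvalues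
`ρ + m(β+ρ) + n(−β+ρ)`. -/
theorem pseudo_boson_eigenvectors_of_diagonal_hamiltonian
    {V : Type*} [AddCommGroup V] [Module ℂ V]
    (C Cd D Dd : Module.End ℂ V)
    (hC : C * Cd - Cd * C = 1) (hD : D * Dd - Dd * D = 1)
    (hCD : C * D - D * C = 0) (hCDd : C * Dd - Dd * C = 0)
    (hCdD : Cd * D - D * Cd = 0) (hCdDd : Cd * Dd - Dd * Cd = 0)
    (β ρ : ℝ) (H : Module.End ℂ V)
    (hH : H = (β : ℂ) • (Cd * C - Dd * D) + (ρ : ℂ) • (Cd * C + D * Dd))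
    (ψ₀ : V) (hCψ : C ψ₀ = 0) (hDψ : D ψ₀ = 0) :
    ∀ m n : ℕ, H ((Cd ^ m) ((Dd ^ n) ψ₀)) =
      ((ρ + m * (β + ρ) + n * (-β + ρ) : ℝ) : ℂ) • (Cd ^ m) ((Dd ^ n) ψ₀) := by
  intro m n
  have hDCd : D * Cd - Cd * D = 0 := by
    rw [sub_eq_zero] at hCdD ⊢; exact hCdD.symm
  have hDdCd : Dd * Cd - Cd * Dd = 0 := by
    rw [sub_eq_zero] at hCdDd ⊢; exact hCdDd.symm
  set Φ := (Cd ^ m) ((Dd ^ n) ψ₀) with hΦ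
  have hCx : C ((Dd ^ n) ψ₀) = 0 := by
    rw [comm_pow_apply C Dd hCDd, hCψ, map_zero]
  have h1 : (Cd * C) Φ = (m : ℂ) • Φ := number_op C Cd hC _ hCx m
  have h2' : (Dd * D) ((Dd ^ n) ψ₀) = (n : ℂ) • (Dd ^ n) ψ₀ :=
    number_op D Dd hD ψ₀ hDψ n
  have h2 : (Dd * D) Φ = (n : ℂ) • Φ := by
    simp only [Module.End.mul_apply] at h2' ⊢
    rw [hΦ, comm_pow_apply D Cd hDCd m, comm_pow_apply Dd Cd hDdCd m, h2', map_smul]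
  have h3 : (D * Dd) Φ = ((n : ℂ) + 1) • Φ := by
    have hDd : D * Dd = Dd * D + 1 := sub_eq_iff_eq_add'.mp hD
    rw [hDd]
    simp only [LinearMap.add_apply, Module.End.one_apply, h2, add_smul, one_smul]
  rw [hH]
  simp only [LinearMap.add_apply, LinearMap.smul_apply, LinearMap.sub_apply, h1, h2, h3]
  push_cast
  match_scalars
  ring
end

section
/- Fix γ > 0, set ρ = √(1+γ²) and α = γ/(1+ρ) (equivalently α = (ρ−1)/γ, and 0 < α < 1), and define Ψ₀ : ℝ² → ℝ by Ψ₀(x,y) = exp(−((1+α²)/(1−α²))(x²+y²) − (4α/(1−α²))xy). Then Ψ₀ is annihilated by the pseudo-boson operators c and d: for all (x,y) ∈ ℝ², (ρ−1)·(y·Ψ₀(x,y) − (1/2)·∂Ψ₀/∂y(x,y)) + γ·(x·Ψ₀(x,y) + (1/2)·∂Ψ₀/∂x(x,y)) = 0 and (ρ−1)·(x·Ψ₀(x,y) − (1/2)·∂Ψ₀/∂x(x,y)) + γ·(y·Ψ₀(x,y) + (1/2)·∂Ψ₀/∂y(x,y)) = 0. -/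
/-- The vacuum `Ψ₀(x,y) = exp(−((1+α²)/(1−α²))(x²+y²) − (4α/(1−α²))xy)`, with
`ρ = √(1+γ²)` and `α = γ/(1+ρ)`, is annihilated by the pseudo-boson operators
`c = 𝒩((ρ−1)b* + γa)` and `d = 𝒩((ρ−1)a* + γb)`, i.e. it satisfies the two displayed
first-order PDEs. -/
theorem vacuum_annihilated_by_pseudo_boson_operators
    (γ : ℝ) (hγ : 0 < γ)
    (ρ α : ℝ) (hρ : ρ = Real.sqrt (1 + γ ^ 2)) (hα : α = γ / (1 + ρ))
    (Ψ₀ : ℝ → ℝ → ℝ)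
    (hΨ : ∀ x y : ℝ, Ψ₀ x y =
      Real.exp (-((1 + α ^ 2) / (1 - α ^ 2)) * (x ^ 2 + y ^ 2)
        - (4 * α / (1 - α ^ 2)) * (x * y))) :
    ∀ x y : ℝ,
      (ρ - 1) * (y * Ψ₀ x y - (1 / 2) * deriv (fun t => Ψ₀ x t) y)
        + γ * (x * Ψ₀ x y + (1 / 2) * deriv (fun t => Ψ₀ t y) x) = 0 ∧
      (ρ - 1) * (x * Ψ₀ x y - (1 / 2) * deriv (fun t => Ψ₀ t y) x)
        + γ * (y * Ψ₀ x y + (1 / 2) * deriv (fun t => Ψ₀ x t) y) = 0 := by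
  -- basic facts about ρ and α
  have hρ2 : ρ ^ 2 = 1 + γ ^ 2 := by
    rw [hρ]; exact Real.sq_sqrt (by positivity)
  have hρ1 : 1 ≤ ρ := by
    rw [hρ]
    nlinarith [Real.sq_sqrt (show (0:ℝ) ≤ 1 + γ ^ 2 by positivity),
      Real.sqrt_nonneg (1 + γ ^ 2)]
  have h1ρ : (1 : ℝ) + ρ ≠ 0 := by linarith
  have hga : γ * α = ρ - 1 := by
    rw [hα]; field_simp; nlinarith
  have hαpos : 0 < α := by
    rw [hα]; positivity
  have hαlt : α < 1 := by
    rw [hα]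
    rw [div_lt_one (by linarith)]
    nlinarith
  have h1α : 1 - α ^ 2 ≠ 0 := by nlinarith
  set C : ℝ := (1 + α ^ 2) / (1 - α ^ 2) with hC
  set D : ℝ := 4 * α / (1 - α ^ 2) with hD
  intro x y
  -- derivative computations
  have hdx : deriv (fun t => Ψ₀ t y) x
      = (-C * (2 * x) - D * y) * Real.exp (-C * (x ^ 2 + y ^ 2) - D * (x * y)) := by
    have hfun : (fun t => Ψ₀ t y)
        = fun t => Real.exp (-C * (t ^ 2 + y ^ 2) - D * (t * y)) := by
      funext t; exact hΨ t y
    rw [hfun]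
    have hinner : HasDerivAt (fun t : ℝ => -C * (t ^ 2 + y ^ 2) - D * (t * y))
        (-C * (2 * x) - D * y) x := by
      have h1 : HasDerivAt (fun t : ℝ => t ^ 2 + y ^ 2) (2 * x) x := by
        simpa using (hasDerivAt_pow 2 x).add_const (y ^ 2)
      have h2 : HasDerivAt (fun t : ℝ => t * y) y x := by
        simpa using (hasDerivAt_id x).mul_const y
      exact (h1.const_mul (-C)).sub (h2.const_mul D)
    rw [hinner.exp.deriv]; ring
  have hdy : deriv (fun t => Ψ₀ x t) y
      = (-C * (2 * y) - D * x) * Real.exp (-C * (x ^ 2 + y ^ 2) - D * (x * y)) := by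
    have hfun : (fun t => Ψ₀ x t)
        = fun t => Real.exp (-C * (x ^ 2 + t ^ 2) - D * (x * t)) := by
      funext t; exact hΨ x t
    rw [hfun]
    have hinner : HasDerivAt (fun t : ℝ => -C * (x ^ 2 + t ^ 2) - D * (x * t))
        (-C * (2 * y) - D * x) y := by
      have h1 : HasDerivAt (fun t : ℝ => x ^ 2 + t ^ 2) (2 * y) y := by
        simpa using (hasDerivAt_pow 2 y).const_add (x ^ 2)
      have h2 : HasDerivAt (fun t : ℝ => x * t) x y := by
        simpa using (hasDerivAt_id y).const_mul x
      exact (h1.const_mul (-C)).sub (h2.const_mul D)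
    rw [hinner.exp.deriv]; ring
  rw [hΨ x y, hdx, hdy]
  set E : ℝ := Real.exp (-C * (x ^ 2 + y ^ 2) - D * (x * y)) with hE
  have hsub : ρ - 1 = γ * α := hga.symm
  constructor <;>
  · rw [hsub, hC, hD]
    field_simp
    ring
end

section
/- Let R be an associative unital ℝ-algebra containing elements A₊, A₋, A₀ satisfying the su(1,1) commutation relations [A₋, A₊] = A₀, [A₀, A₊] = 2A₊, [A₀, A₋] = −2A₋. Fix γ > 0 and set ρ = √(1+γ²). Define B₊ = (γ/(2ρ))·( ((1+ρ)/γ)·A₊ + (γ/(1+ρ))·A₋ − A₀ ), B₋ = (γ/(2ρ))·( ((−1+ρ)/γ)·A₊ + (γ/(−1+ρ))·A₋ + A₀ ), and B₀ = (1/ρ)·(A₀ + γ(A₊ − A₋)). Then B₊, B₋, B₀ also satisfy the su(1,1) commutation relations: [B₋, B₊] = B₀, [B₀, B₊] = 2B₊, and [B₀, B₋] = −2B₋. -/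
set_option linter.unreachableTactic false
set_option linter.unusedTactic false

lemma su11_comm_aux {R : Type*} [Ring R] [Algebra ℝ R]
    (Ap Am A0 : R)
    (e1 : Am * Ap = Ap * Am + A0)
    (e2 : A0 * Ap = Ap * A0 + (2:ℝ) • Ap)
    (e3 : A0 * Am = Am * A0 + (-2:ℝ) • Am)
    (a b c a' b' c' : ℝ) :
    (a • Ap + b • Am + c • A0) * (a' • Ap + b' • Am + c' • A0)
      - (a' • Ap + b' • Am + c' • A0) * (a • Ap + b • Am + c • A0)
    = (2 * (c * a' - a * c')) • Ap + (-2 * (c * b' - b * c')) • Am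
      + (b * a' - a * b') • A0 := by
  simp only [add_mul, mul_add, smul_mul_assoc, mul_smul_comm, smul_smul, e1, e2, e3]
  match_scalars <;> ring

/-- If `A₊, A₋, A₀` satisfy the `su(1,1)` relations `[A₋,A₊] = A₀`, `[A₀,A₊] = 2A₊`,
`[A₀,A₋] = −2A₋`, and `γ > 0`, `ρ = √(1+γ²)`, then the operators
`B₊ = (γ/(2ρ))(((1+ρ)/γ)A₊ + (γ/(1+ρ))A₋ − A₀)`,
`B₋ = (γ/(2ρ))(((−1+ρ)/γ)A₊ + (γ/(−1+ρ))A₋ + A₀)` and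
`B₀ = (1/ρ)(A₀ + γ(A₊ − A₋))` also satisfy the `su(1,1)` commutation relations. -/
theorem transformed_su11_generators_satisfy_relations
    {R : Type*} [Ring R] [Algebra ℝ R]
    (Ap Am A0 : R)
    (h1 : Am * Ap - Ap * Am = A0)
    (h2 : A0 * Ap - Ap * A0 = (2 : ℝ) • Ap)
    (h3 : A0 * Am - Am * A0 = (-2 : ℝ) • Am)
    (γ : ℝ) (hγ : 0 < γ) (ρ : ℝ) (hρ : ρ = Real.sqrt (1 + γ ^ 2))
    (Bp Bm B0 : R)
    (hBp : Bp = (γ / (2 * ρ)) • (((1 + ρ) / γ) • Ap + (γ / (1 + ρ)) • Am - A0))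
    (hBm : Bm = (γ / (2 * ρ)) • (((-1 + ρ) / γ) • Ap + (γ / (-1 + ρ)) • Am + A0))
    (hB0 : B0 = (1 / ρ) • (A0 + γ • (Ap - Am))) :
    Bm * Bp - Bp * Bm = B0 ∧
      B0 * Bp - Bp * B0 = (2 : ℝ) • Bp ∧
      B0 * Bm - Bm * B0 = (-2 : ℝ) • Bm := by
  have hρ2 : ρ ^ 2 = 1 + γ ^ 2 := by
    rw [hρ, Real.sq_sqrt]; positivity
  have hρ1 : 1 < ρ := by
    have h0 : 0 ≤ ρ := hρ ▸ Real.sqrt_nonneg _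
    nlinarith
  have hγ0 : γ ≠ 0 := ne_of_gt hγ
  have hρne : ρ ≠ 0 := by positivity
  have h1p : (1 + ρ) ≠ 0 := by positivity
  have h1m : (-1 + ρ) ≠ 0 := by nlinarith
  have e1 : Am * Ap = Ap * Am + A0 := by rw [← h1]; abel
  have e2 : A0 * Ap = Ap * A0 + (2:ℝ) • Ap := by rw [← h2]; abel
  have e3 : A0 * Am = Am * A0 + (-2:ℝ) • Am := by rw [← h3]; abel
  have hBp' : Bp = ((1 + ρ)/(2*ρ)) • Ap + ((-1 + ρ)/(2*ρ)) • Am + (-(γ/(2*ρ))) • A0 := by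
    rw [hBp]; match_scalars <;> field_simp <;>
      first
      | ring1
      | linear_combination (2*ρ)*hρ2
      | linear_combination (-2*ρ)*hρ2
      | linear_combination (4*ρ)*hρ2
      | linear_combination (-4*ρ)*hρ2
      | linear_combination hρ2
      | linear_combination (-1)*hρ2
  have hBm' : Bm = ((-1 + ρ)/(2*ρ)) • Ap + ((1 + ρ)/(2*ρ)) • Am + (γ/(2*ρ)) • A0 := by
    rw [hBm]; match_scalars <;> field_simp <;>
      first
      | ring1
      | linear_combination (2*ρ)*hρ2
      | linear_combination (-2*ρ)*hρ2
      | linear_combination (4*ρ)*hρ2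
      | linear_combination (-4*ρ)*hρ2
      | linear_combination hρ2
      | linear_combination (-1)*hρ2
  have hB0' : B0 = (γ/ρ) • Ap + (-(γ/ρ)) • Am + (1/ρ) • A0 := by
    rw [hB0]; match_scalars <;> ring
  rw [hBp', hBm', hB0']
  refine ⟨?_, ?_, ?_⟩ <;>
  · rw [su11_comm_aux Ap Am A0 e1 e2 e3]
    match_scalars <;> field_simp <;>
      first
      | ring1
      | linear_combination (2*ρ)*hρ2
      | linear_combination (-2*ρ)*hρ2
      | linear_combination (4*ρ)*hρ2
      | linear_combination (-4*ρ)*hρ2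
      | linear_combination hρ2
      | linear_combination (-1)*hρ2
end

section
/- Fix a natural number κ and γ > 0; set ρ = √(1+γ²) and α = (ρ−1)/γ. Define the sequence ψ : ℕ → ℝ by ψ_n = (−α)ⁿ · √(binom(κ+n, n)), where binom denotes the binomial coefficient. Then ψ is annihilated by the lowering operator B₋, i.e., for every n ∈ ℕ: α·√(n(κ+n))·ψ_{n−1} + (1/α)·√((n+1)(κ+n+1))·ψ_{n+1} + (κ+2n+1)·ψ_n = 0, where for n = 0 the first term vanishes (its coefficient √(0·κ) is 0). -/
lemma nat_key (κ j : ℕ) : (κ + j + 1) * (κ + j).choose j = (κ + j + 1).choose (j+1) * (j+1) :=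
  (Nat.add_one_mul_choose_eq (κ + j) j).symm ▸ rfl

lemma sqrt_key (κ j : ℕ) :
    Real.sqrt (((j:ℝ)+1) * ((κ:ℝ)+j+1)) * Real.sqrt (((κ+j+1).choose (j+1) : ℕ) : ℝ)
      = ((κ:ℝ)+j+1) * Real.sqrt (((κ+j).choose j : ℕ) : ℝ) := by
  have h1 : (0:ℝ) ≤ ((κ:ℝ)+j+1) := by positivity
  rw [← Real.sqrt_mul (by positivity), show ((κ:ℝ)+j+1) * Real.sqrt (((κ+j).choose j : ℕ) : ℝ)
      = Real.sqrt (((κ:ℝ)+j+1)^2 * ((κ+j).choose j : ℕ)) by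
    rw [Real.sqrt_mul (sq_nonneg _), Real.sqrt_sq h1]]
  congr 1
  have h2 : ((κ + j + 1) * (κ + j).choose j : ℝ) = ((κ + j + 1).choose (j+1) * (j+1) : ℝ) := by
    exact_mod_cast congrArg (Nat.cast : ℕ → ℝ) (nat_key κ j)
  push_cast at h2 ⊢
  nlinarith [h2]

lemma sqrt_key' (κ j : ℕ) :
    Real.sqrt (((j:ℝ)+1) * ((κ:ℝ)+j+1)) * Real.sqrt (((κ+j).choose j : ℕ) : ℝ)
      = ((j:ℝ)+1) * Real.sqrt (((κ+j+1).choose (j+1) : ℕ) : ℝ) := by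
  have h1 : (0:ℝ) ≤ ((j:ℝ)+1) := by positivity
  rw [← Real.sqrt_mul (by positivity), show ((j:ℝ)+1) * Real.sqrt (((κ+j+1).choose (j+1) : ℕ) : ℝ)
      = Real.sqrt (((j:ℝ)+1)^2 * ((κ+j+1).choose (j+1) : ℕ)) by
    rw [Real.sqrt_mul (sq_nonneg _), Real.sqrt_sq h1]]
  congr 1
  have h2 : ((κ + j + 1) * (κ + j).choose j : ℝ) = ((κ + j + 1).choose (j+1) * (j+1) : ℝ) := by
    exact_mod_cast congrArg (Nat.cast : ℕ → ℝ) (nat_key κ j)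
  push_cast at h2 ⊢
  nlinarith [h2]

/-- The sequence `ψₙ = (−α)ⁿ √(binom(κ+n, n))`, with `ρ = √(1+γ²)` and `α = (ρ−1)/γ`,
is annihilated by the lowering operator `B₋`: for every `n`,
`α√(n(κ+n)) ψ_{n−1} + (1/α)√((n+1)(κ+n+1)) ψ_{n+1} + (κ+2n+1) ψₙ = 0`
(for `n = 0` the first term vanishes since its coefficient `√(0·κ)` is `0`). -/
theorem lowest_weight_vector_annihilated_by_lowering
    (κ : ℕ) (γ : ℝ) (hγ : 0 < γ)
    (ρ α : ℝ) (hρ : ρ = Real.sqrt (1 + γ ^ 2)) (hα : α = (ρ - 1) / γ)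
    (ψ : ℕ → ℝ)
    (hψ : ∀ n : ℕ, ψ n = (-α) ^ n * Real.sqrt ((κ + n).choose n)) :
    ∀ n : ℕ,
      α * Real.sqrt ((n : ℝ) * ((κ : ℝ) + n)) * ψ (n - 1)
        + (1 / α) * Real.sqrt (((n : ℝ) + 1) * ((κ : ℝ) + n + 1)) * ψ (n + 1)
        + ((κ : ℝ) + 2 * n + 1) * ψ n = 0 := by
  have hρ1 : 1 < ρ := by
    have h0 : (0:ℝ) ≤ 1 + γ ^ 2 := by positivity
    nlinarith [Real.sq_sqrt h0, Real.sqrt_nonneg (1 + γ^2), hρ]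
  have hαpos : 0 < α := by rw [hα]; exact div_pos (by linarith) hγ
  have hαne : α ≠ 0 := ne_of_gt hαpos
  have hinv : α⁻¹ * α = 1 := inv_mul_cancel₀ hαne
  intro n
  match n with
  | 0 =>
    simp only [hψ]
    norm_num
    have hs : Real.sqrt ((κ:ℝ)+1) * Real.sqrt ((κ:ℝ)+1) = (κ:ℝ)+1 :=
      Real.mul_self_sqrt (by positivity)
    linear_combination (-(α⁻¹*α)) * hs + (-((κ:ℝ)+1)) * hinv
  | (m+1) =>
    have hA := sqrt_key' κ m
    have hB := sqrt_key κ (m+1)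
    rw [show κ+(m+1)+1 = κ+m+2 from by omega, show κ+(m+1) = κ+m+1 from by omega] at hB
    simp only [hψ, Nat.add_sub_cancel]
    rw [show κ+(m+1+1) = κ+m+2 from by omega, show κ+(m+1) = κ+m+1 from by omega]
    push_cast at hA hB ⊢
    ring_nf at hA hB ⊢
    linear_combination (α * (-α)^m) * hA + (α⁻¹ * (-α)^(m+2)) * hB
      + (α * (-α)^m * ((κ:ℝ)+m+2) * Real.sqrt (((1+κ+m).choose (1+m) : ℕ) : ℝ)) * hinv
end
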